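/- If σ is a permutation of a finite set and σ = τ₂ ∘ τ₁ with τ₁, τ₂ involutions, then for any cycle O of σ (viewed as the set of its points), τ₁(O) = τ₂(O), and τ₁(O) is the set of points of a single cycle of σ of the same length |O|. -/
import Mathlib


/-- If `σ = τ₂ ∘ τ₁` with `τ₁, τ₂` involutions, and `O` is the set of points of a cycle of `σ`,
then `τ₁(O) = τ₂(O)`, `τ₁(O)` is the point set of a single cycle of `σ`, and it has the same
cardinality as `O`. -/
theorem stmt_2 {α : Type*} [Fintype α] (σ τ₁ τ₂ : Equiv.Perm α)
    (h1 : τ₁ * τ₁ = 1) (h2 : τ₂ * τ₂ = 1) (h : σ = τ₂ * τ₁)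
    (x : α) (O : Set α) (hO : O = {y | ∃ t : ℤ, y = (σ ^ t) x}) :
    τ₁ '' O = τ₂ '' O ∧
    (∃ z : α, τ₁ '' O = {y | ∃ t : ℤ, y = (σ ^ t) z}) ∧
    (τ₁ '' O).ncard = O.ncard := by
  have hτ1 : τ₁⁻¹ = τ₁ := by
    rw [inv_eq_iff_mul_eq_one]; exact h1
  have hτ2 : τ₂⁻¹ = τ₂ := by
    rw [inv_eq_iff_mul_eq_one]; exact h2
  have hc1 : τ₁ * σ * τ₁⁻¹ = σ⁻¹ := by
    rw [hτ1, h, mul_inv_rev, hτ1, hτ2]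
    calc τ₁ * (τ₂ * τ₁) * τ₁ = τ₁ * τ₂ * (τ₁ * τ₁) := by group
    _ = τ₁ * τ₂ := by rw [h1, mul_one]
  have hc2 : τ₂ * σ * τ₂⁻¹ = σ⁻¹ := by
    rw [hτ2, h, mul_inv_rev, hτ1, hτ2]
    calc τ₂ * (τ₂ * τ₁) * τ₂ = (τ₂ * τ₂) * (τ₁ * τ₂) := by group
    _ = τ₁ * τ₂ := by rw [h2, one_mul]
  have key1 : ∀ t : ℤ, τ₁ * σ ^ t = σ ^ (-t) * τ₁ := by
    intro t
    have := map_zpow (MulAut.conj τ₁) σ t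
    simp only [MulAut.conj_apply] at this
    rw [hc1] at this
    have : τ₁ * σ ^ t * τ₁⁻¹ = σ ^ (-t) := by rw [this, zpow_neg, inv_zpow]
    rw [hτ1] at this
    calc τ₁ * σ ^ t = (τ₁ * σ ^ t * τ₁) * τ₁ := by
          rw [mul_assoc, h1, mul_one]
    _ = σ ^ (-t) * τ₁ := by rw [this]
  have key2 : ∀ t : ℤ, τ₂ * σ ^ t = σ ^ (-t) * τ₂ := by
    intro t
    have := map_zpow (MulAut.conj τ₂) σ t
    simp only [MulAut.conj_apply] at this
    rw [hc2] at this
    have : τ₂ * σ ^ t * τ₂⁻¹ = σ ^ (-t) := by rw [this, zpow_neg, inv_zpow]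
    rw [hτ2] at this
    calc τ₂ * σ ^ t = (τ₂ * σ ^ t * τ₂) * τ₂ := by
          rw [mul_assoc, h2, mul_one]
    _ = σ ^ (-t) * τ₂ := by rw [this]
  have hτ2x : τ₂ x = σ (τ₁ x) := by
    have : σ (τ₁ x) = τ₂ (τ₁ (τ₁ x)) := by rw [h]; rfl
    rw [this]
    have : τ₁ (τ₁ x) = x := by
      simpa [Equiv.Perm.mul_apply] using DFunLike.congr_fun h1 x
    rw [this]
  have him1 : τ₁ '' O = {y | ∃ t : ℤ, y = (σ ^ t) (τ₁ x)} := by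
    ext y
    constructor
    · rintro ⟨w, hw, rfl⟩
      rw [hO] at hw
      obtain ⟨t, rfl⟩ := hw
      exact ⟨-t, by
        have := DFunLike.congr_fun (key1 t) x
        simpa [Equiv.Perm.mul_apply] using this⟩
    · rintro ⟨t, rfl⟩
      refine ⟨(σ ^ (-t)) x, ?_, ?_⟩
      · rw [hO]; exact ⟨-t, rfl⟩
      · have := DFunLike.congr_fun (key1 (-t)) x
        simpa [Equiv.Perm.mul_apply] using this
  have him2 : τ₂ '' O = {y | ∃ t : ℤ, y = (σ ^ t) (τ₁ x)} := by
    ext y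
    constructor
    · rintro ⟨w, hw, rfl⟩
      rw [hO] at hw
      obtain ⟨t, rfl⟩ := hw
      refine ⟨-t + 1, ?_⟩
      have h3 := DFunLike.congr_fun (key2 t) x
      simp only [Equiv.Perm.coe_mul, Function.comp_apply] at h3
      rw [h3, hτ2x, ← Equiv.Perm.mul_apply, ← zpow_add_one]
    · rintro ⟨t, rfl⟩
      refine ⟨(σ ^ (-t + 1)) x, ?_, ?_⟩
      · rw [hO]; exact ⟨-t + 1, rfl⟩
      · have h3 := DFunLike.congr_fun (key2 (-t + 1)) x
        simp only [Equiv.Perm.coe_mul, Function.comp_apply] at h3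
        rw [h3, hτ2x, ← Equiv.Perm.mul_apply, ← zpow_add_one]
        ring_nf
  refine ⟨by rw [him1, him2], ⟨τ₁ x, him1⟩, Set.ncard_image_of_injective O τ₁.injective⟩
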